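/- Let (V,E) be a connected graph with connection ∇, sign function ε and invariant function c, and let u ∈ V. Then the evaluation map A(Γ) → ℤ star(u), f ↦ f_u, is a group isomorphism from the group of axial functions A(Γ) onto the subgroup (ℤ star(u))^{π₁(Γ,u)} of elements fixed by the A-monodromy representation of the edge-path group π₁(Γ,u). -/

import Mathlib

attribute [local instance] Classical.propDecidable

/-- A graph with directed edges `E`, vertices `V`, edge reversal, and a
(combinatorial) connection `conn`, where `conn e e'` is the transport of an
edge `e'` with `ini e' = ini e` along the edge `e`. -/
structure ConnGraph (V : Type*) (E : Type*) where
  ini : E → V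
  ter : E → V
  rev : E → E
  rev_ini : ∀ e, ini (rev e) = ter e
  rev_ter : ∀ e, ter (rev e) = ini e
  rev_rev : ∀ e, rev (rev e) = e
  conn : E → E → E
  conn_ini : ∀ e e', ini e' = ini e → ini (conn e e') = ter e
  conn_self : ∀ e, conn e e = rev e
  conn_inv : ∀ e e', ini e' = ini e → conn (rev e) (conn e e') = e'

namespace ConnGraph

variable {V E : Type*} (G : ConnGraph V E)

/-- One step of adjacency along an edge. -/
def Step (a b : V) : Prop := ∃ e : E, G.ini e = a ∧ G.ter e = b

/-- The graph is connected. -/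
def Connected : Prop := ∀ a b : V, Relation.ReflTransGen G.Step a b

/-- The graph is `n`-valent: every star has exactly `n` edges. -/
def NValent (n : ℕ) : Prop := ∀ v : V, {e : E | G.ini e = v}.ncard = n

/-- A sign function on a graph with connection: `ε e e'` plays the role of
`⟨ε(e), e'⟩` for `e'` in the star of `ini e`. -/
def IsSignFunction (ε : E → E → ℤ) : Prop :=
  (∀ e e' : E, G.ini e' = G.ini e → ε e e' = 1 ∨ ε e e' = -1) ∧
  (∀ e : E, ε e e = 1) ∧
  (∀ e e' : E, G.ini e' = G.ini e → ε (G.rev e) (G.conn e e') = ε e e')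

/-- An invariant function (relative to a sign function): `c e e'` plays the
role of `⟨c(e), e'⟩`. -/
def IsInvariantFunction (ε c : E → E → ℤ) : Prop :=
  (∀ e : E, c e e = -2) ∧
  (∀ e e' : E, G.ini e' = G.ini e →
    c e e' = ε (G.rev e) (G.conn e e') * c (G.rev e) (G.conn e e'))

/-- A label function: an element of the group `L(Γ)`. -/
def IsLabelFunction (ε c : E → E → ℤ) (a : E → ℤ) : Prop :=
  ∀ e e' : E, G.ini e' = G.ini e →
    a (G.conn e e') = ε e e' * a e' + c e e' * a e

/-- `x : E → ℤ` represents an element of `ℤ star(v)`: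
it is supported on the star of `v`. -/
def StarSupported (v : V) (x : E → ℤ) : Prop := ∀ e : E, G.ini e ≠ v → x e = 0

/-- An element of the group of axial functions `A(Γ)`: a tuple `(f v)_{v ∈ V}`
with `f v ∈ ℤ star(v)`, satisfying `f (t e) = φ_e (f (i e))` for every edge. -/
def IsAxialTuple (ε c : E → E → ℤ) (f : V → E → ℤ) : Prop :=
  (∀ v : V, G.StarSupported v (f v)) ∧
  (∀ e e' : E, G.ini e' = G.ini e →
    f (G.ter e) (G.conn e e') = ε e e' * f (G.ini e) e' + f (G.ini e) e * c e e')

/-- The map `φ_e : ℤ star(i e) → ℤ star(t e)`,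
`φ_e(x) = ∇_e (ε(e)·x + ⟨x, e⟩·c(e))`. -/
noncomputable def phi (ε c : E → E → ℤ) (e : E) (x : E → ℤ) : E → ℤ := fun e'' =>
  if G.ini e'' = G.ter e then
    ε e (G.conn (G.rev e) e'') * x (G.conn (G.rev e) e'') +
      x e * c e (G.conn (G.rev e) e'')
  else 0

/-- `φ_γ` for an edge path `γ = (e₁, …, e_q)`: the composite
`φ_{e_q} ∘ ⋯ ∘ φ_{e₁}`. -/
noncomputable def phiList (ε c : E → E → ℤ) : List E → (E → ℤ) → (E → ℤ)
  | [], x => x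
  | e :: l, x => phiList ε c l (G.phi ε c e x)

/-- The parallel transport (monodromy) operator `Π_γ = ∇_{e_q} ∘ ⋯ ∘ ∇_{e₁}`
along an edge path, on edges. -/
def transportList : List E → E → E
  | [], x => x
  | e :: l, x => transportList l (G.conn e x)

/-- `IsPath u w l`: the list of edges `l` is an edge path from `u` to `w`. -/
def IsPath : V → V → List E → Prop
  | u, w, [] => u = w
  | u, w, e :: l => G.ini e = u ∧ IsPath (G.ter e) w l

/-- Elementary homotopy of edge paths: deletion of a backtrack `(e, ē)`. -/
inductive HomotopyStep : List E → List E → Prop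
  | backtrack (l₁ l₂ : List E) (e : E) :
      HomotopyStep (l₁ ++ e :: G.rev e :: l₂) (l₁ ++ l₂)

/-- Homotopy of edge paths: the equivalence relation generated by insertion
and deletion of backtracks. -/
def Homotopic : List E → List E → Prop := Relation.EqvGen G.HomotopyStep

/-- A 2-face: a nonempty connected 2-valent subgraph (given by its set of
edges, closed under reversal) which is invariant under the connection. -/
def IsTwoFace (F : Set E) : Prop :=
  F.Nonempty ∧
  (∀ e ∈ F, G.rev e ∈ F) ∧
  (∀ e ∈ F, {e' : E | e' ∈ F ∧ G.ini e' = G.ini e}.ncard = 2) ∧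
  (∀ e ∈ F, ∀ e' ∈ F, G.ini e' = G.ini e → G.conn e e' ∈ F) ∧
  (∀ e ∈ F, ∀ e' ∈ F, ∃ l : List E,
    (∀ x ∈ l, x ∈ F) ∧ G.IsPath (G.ini e) (G.ini e') l)

/-- `f` is a boundary cycle of the 2-face `F`, based at `w`: a closed edge
path at `w` traversing each geometric edge of `F` exactly once. -/
def IsFaceBoundary (F : Set E) (w : V) (f : List E) : Prop :=
  G.IsTwoFace F ∧ f ≠ [] ∧ G.IsPath w w f ∧ (∀ e ∈ f, e ∈ F) ∧
  f.Nodup ∧ (∀ e ∈ f, G.rev e ∉ f) ∧ (∀ e ∈ F, e ∈ f ∨ G.rev e ∈ f)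

/-- A conjugated 2-face at the base vertex `v`: a loop of the form
`g · f · g⁻¹` where `g` is an edge path from `v` and `f` is a boundary cycle
of a 2-face based at the endpoint of `g`. -/
def ConjFaceLoop (v : V) (l : List E) : Prop :=
  ∃ (w : V) (g f : List E) (F : Set E),
    G.IsPath v w g ∧ G.IsFaceBoundary F w f ∧
    l = g ++ f ++ (g.reverse.map G.rev)

/-- The conjugated 2-faces generate the fundamental group (the edge-path
group): every closed edge path is homotopic to a concatenation of conjugated
2-face loops. -/
def FacesGeneratePi1 : Prop :=
  ∀ (v : V) (l : List E), G.IsPath v v l →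
    ∃ ls : List (List E), (∀ m ∈ ls, G.ConjFaceLoop v m) ∧
      G.Homotopic l ls.flatten

end ConnGraph

/-- `(G, lab)` is an abstract unsigned GKM graph, where `lab` is a chosen lift
`α̃ : E → ℤ^k` of the unsigned axial function `α : E → ℤ^k/±1`. -/
structure IsUnsignedGKM {V E : Type*} (G : ConnGraph V E) {k : ℕ}
    (lab : E → Fin k → ℤ) : Prop where
  connected : G.Connected
  lab_ne : ∀ e : E, lab e ≠ 0
  lab_rev : ∀ e : E, lab (G.rev e) = -lab e
  indep₂ : ∀ e e' : E, G.ini e' = G.ini e → e ≠ e' →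
    LinearIndependent ℚ ![(fun j => (lab e j : ℚ)), (fun j => (lab e' j : ℚ))]
  congru : ∀ e e' : E, G.ini e' = G.ini e →
    ∃ s m : ℤ, (s = 1 ∨ s = -1) ∧ lab (G.conn e e') = s • lab e' + m • lab e

/-- The GKM₃ condition: any three labels at a common vertex are linearly
independent over `ℚ`. -/
def IsGKM3 {V E : Type*} (G : ConnGraph V E) {k : ℕ} (lab : E → Fin k → ℤ) : Prop :=
  ∀ e₁ e₂ e₃ : E, G.ini e₂ = G.ini e₁ → G.ini e₃ = G.ini e₁ →
    e₁ ≠ e₂ → e₁ ≠ e₃ → e₂ ≠ e₃ →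
    LinearIndependent ℚ
      ![(fun j => (lab e₁ j : ℚ)), (fun j => (lab e₂ j : ℚ)),
        (fun j => (lab e₃ j : ℚ))]

/-- `(ε, c)` are the sign and integer data associated to the lift `lab` of the
axial function, via the congruence relation
`α̃(∇_e e') = ⟨ε(e),e'⟩·α̃(e') + ⟨c(e),e'⟩·α̃(e)`, normalized by
`⟨ε(e),e⟩ = 1` and `⟨c(e),e⟩ = -2`. -/
def IsCompatibleData {V E : Type*} (G : ConnGraph V E) {k : ℕ}
    (lab : E → Fin k → ℤ) (ε c : E → E → ℤ) : Prop :=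
  (∀ e e' : E, G.ini e' = G.ini e → ε e e' = 1 ∨ ε e e' = -1) ∧
  (∀ e : E, ε e e = 1) ∧ (∀ e : E, c e e = -2) ∧
  (∀ e e' : E, G.ini e' = G.ini e →
    lab (G.conn e e') = ε e e' • lab e' + c e e' • lab e)

/-- The axial function is almost effective: the `ℤ`-span of its image has
finite index in `ℤ^k`. -/
def AlmostEffective {E : Type*} {k : ℕ} (lab : E → Fin k → ℤ) : Prop :=
  (Submodule.span ℤ (Set.range lab)).toAddSubgroup.index ≠ 0

/-- The axial function is effective: the `ℤ`-span of its image is all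
of `ℤ^k`. -/
def Effective {E : Type*} {k : ℕ} (lab : E → Fin k → ℤ) : Prop :=
  Submodule.span ℤ (Set.range lab) = ⊤

namespace ConnGraphAux

open ConnGraph

variable {V E : Type*} (G : ConnGraph V E) (ε c : E → E → ℤ)

lemma phi_supported (e : E) (x : E → ℤ) :
    G.StarSupported (G.ter e) (G.phi ε c e x) := by
  intro e'' h
  simp [ConnGraph.phi, h]

lemma isPath_append {a b d : V} : ∀ {l : List E}, ∀ {m : List E},
    G.IsPath a b l → G.IsPath b d m → G.IsPath a d (l ++ m) := by
  intro l
  induction l generalizing a with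
  | nil =>
    intro m h1 h2
    simp only [ConnGraph.IsPath] at h1
    subst h1
    simpa using h2
  | cons e t ih =>
    intro m h1 h2
    exact ⟨h1.1, ih h1.2 h2⟩

/-- reversed path -/
def revpath (l : List E) : List E := l.reverse.map G.rev

lemma revpath_revpath (l : List E) : revpath G (revpath G l) = l := by
  unfold revpath
  rw [← List.map_reverse, List.reverse_reverse, List.map_map]
  have : G.rev ∘ G.rev = id := funext G.rev_rev
  rw [this, List.map_id]

lemma isPath_revpath {a b : V} : ∀ {l : List E},
    G.IsPath a b l → G.IsPath b a (revpath G l) := by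
  intro l
  induction l generalizing a with
  | nil =>
    intro h
    simp only [ConnGraph.IsPath] at h
    subst h
    simp [revpath, ConnGraph.IsPath]
  | cons e t ih =>
    intro h
    have h1 : G.IsPath b (G.ter e) (revpath G t) := ih h.2
    have h2 : G.IsPath (G.ter e) a [G.rev e] := by
      refine ⟨G.rev_ini e, ?_⟩
      simp only [ConnGraph.IsPath, G.rev_ter]
      exact h.1
    have := isPath_append G h1 h2
    simpa [revpath] using this

lemma phiList_append : ∀ (l m : List E) (x : E → ℤ),
    G.phiList ε c (l ++ m) x = G.phiList ε c m (G.phiList ε c l x) := by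
  intro l
  induction l with
  | nil => intro m x; rfl
  | cons e t ih => intro m x; simp [ConnGraph.phiList, ih]

lemma phi_rev_phi (hε : G.IsSignFunction ε) (hc : G.IsInvariantFunction ε c)
    (e : E) (x : E → ℤ) (hx : G.StarSupported (G.ini e) x) :
    G.phi ε c (G.rev e) (G.phi ε c e x) = x := by
  funext e'
  by_cases h : G.ini e' = G.ini e
  · have hcond : G.ini e' = G.ter (G.rev e) := by rw [G.rev_ter]; exact h
    have hconn_ini : G.ini (G.conn e e') = G.ter e := G.conn_ini e e' h
    have hinv : G.conn (G.rev e) (G.conn e e') = e' := G.conn_inv e e' h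
    have hrevcond : G.ini (G.rev e) = G.ter e := G.rev_ini e
    have hselfconn : G.conn (G.rev e) (G.rev e) = e := by
      rw [G.conn_self (G.rev e), G.rev_rev]
    simp only [ConnGraph.phi, hcond, if_true, hconn_ini, hrevcond, G.rev_rev,
      hinv, hselfconn]
    have hεe : ε e e = 1 := hε.2.1 e
    have hce : c e e = -2 := hc.1 e
    have hεr : ε (G.rev e) (G.conn e e') = ε e e' := hε.2.2 e e' h
    have hcr : c e e' = ε (G.rev e) (G.conn e e') * c (G.rev e) (G.conn e e') :=
      hc.2 e e' h
    rw [hεr] at hcr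
    have hs : ε e e' * ε e e' = 1 := by
      rcases hε.1 e e' h with h1 | h1 <;> rw [h1] <;> ring
    rw [hεr, hεe, hce]
    -- goal: ε e e' * (ε e e' * x e' + x e * c e e') + (1 * x e + x e * (-2)) * c (rev e) (conn e e') = x e'
    set s := ε e e' with hsdef
    set cR := c (G.rev e) (G.conn e e') with hcRdef
    have hcr' : c e e' = s * cR := hcr
    rw [hcr']
    linear_combination (x e' + x e * cR) * hs
  · have hcond : ¬ G.ini e' = G.ter (G.rev e) := by rw [G.rev_ter]; exact h
    simp only [ConnGraph.phi, hcond, if_false]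
    exact (hx e' h).symm

lemma phiList_supported {a b : V} : ∀ {l : List E} {x : E → ℤ},
    G.IsPath a b l → G.StarSupported a x → G.StarSupported b (G.phiList ε c l x) := by
  intro l
  induction l generalizing a with
  | nil =>
    intro x h hx
    simp only [ConnGraph.IsPath] at h
    subst h
    exact hx
  | cons e t ih =>
    intro x h hx
    exact ih h.2 (phi_supported G ε c e x)

lemma phiList_revpath (hε : G.IsSignFunction ε) (hc : G.IsInvariantFunction ε c)
    {a b : V} : ∀ {l : List E} {x : E → ℤ},
    G.IsPath a b l → G.StarSupported a x →
    G.phiList ε c (revpath G l) (G.phiList ε c l x) = x := by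
  intro l
  induction l generalizing a with
  | nil =>
    intro x h hx
    rfl
  | cons e t ih =>
    intro x h hx
    have hstep : revpath G (e :: t) = revpath G t ++ [G.rev e] := by
      simp [revpath]
    rw [hstep, phiList_append]
    have hxe : G.StarSupported (G.ter e) (G.phi ε c e x) := phi_supported G ε c e x
    have := ih h.2 hxe
    show G.phiList ε c [G.rev e]
      (G.phiList ε c (revpath G t) (G.phiList ε c t (G.phi ε c e x))) = x
    rw [this]
    show G.phi ε c (G.rev e) (G.phi ε c e x) = x
    have hxe' : G.StarSupported (G.ini e) x := by rw [h.1]; exact hx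
    exact phi_rev_phi G ε c hε hc e x hxe'

lemma exists_path {a b : V} (h : Relation.ReflTransGen (G.Step) a b) :
    ∃ l : List E, G.IsPath a b l := by
  induction h with
  | refl => exact ⟨[], rfl⟩
  | tail _ hstep ih =>
    obtain ⟨l, hl⟩ := ih
    obtain ⟨e, he1, he2⟩ := hstep
    refine ⟨l ++ [e], isPath_append G hl ⟨he1, ?_⟩⟩
    simpa [ConnGraph.IsPath] using he2

lemma well_defined (hε : G.IsSignFunction ε) (hc : G.IsInvariantFunction ε c)
    {u w : V} {x : E → ℤ} (hxs : G.StarSupported u x)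
    (hxi : ∀ l : List E, G.IsPath u u l → G.phiList ε c l x = x)
    {l l' : List E} (hl : G.IsPath u w l) (hl' : G.IsPath u w l') :
    G.phiList ε c l x = G.phiList ε c l' x := by
  have hloop : G.IsPath u u (l ++ revpath G l') :=
    isPath_append G hl (isPath_revpath G hl')
  have h1 : G.phiList ε c (revpath G l') (G.phiList ε c l x) = x := by
    rw [← phiList_append]; exact hxi _ hloop
  have hz : G.StarSupported w (G.phiList ε c l x) := phiList_supported G ε c hl hxs
  have h2 := phiList_revpath G ε c hε hc (isPath_revpath G hl') hz
  rw [revpath_revpath] at h2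
  rw [h1] at h2
  exact h2.symm

lemma axial_transport {f : V → E → ℤ} (hf : G.IsAxialTuple ε c f) (e : E) :
    f (G.ter e) = G.phi ε c e (f (G.ini e)) := by
  funext e''
  by_cases h : G.ini e'' = G.ter e
  · have hrev : G.ini e'' = G.ini (G.rev e) := by rw [G.rev_ini]; exact h
    have hini : G.ini (G.conn (G.rev e) e'') = G.ini e := by
      rw [G.conn_ini (G.rev e) e'' hrev, G.rev_ter]
    have hconn : G.conn e (G.conn (G.rev e) e'') = e'' := by
      have := G.conn_inv (G.rev e) e'' hrev
      rwa [G.rev_rev] at this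
    have := hf.2 e (G.conn (G.rev e) e'') hini
    rw [hconn] at this
    simp only [ConnGraph.phi, h, if_true]
    exact this
  · have h1 : f (G.ter e) e'' = 0 := hf.1 (G.ter e) e'' h
    simp only [ConnGraph.phi, h, if_false]
    exact h1

lemma axial_path {f : V → E → ℤ} (hf : G.IsAxialTuple ε c f) {a b : V} :
    ∀ {l : List E}, G.IsPath a b l → G.phiList ε c l (f a) = f b := by
  intro l
  induction l generalizing a with
  | nil =>
    intro h
    simp only [ConnGraph.IsPath] at h
    subst h
    rfl
  | cons e t ih =>
    intro h
    show G.phiList ε c t (G.phi ε c e (f a)) = f b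
    rw [← h.1, ← axial_transport G ε c hf e]
    exact ih h.2

end ConnGraphAux

/-- The evaluation `f ↦ f_u` is a group isomorphism from the
group of axial functions `A(Γ)` onto the subgroup of `ℤ star(u)` of elements
fixed by the A-monodromy representation of `π₁(Γ, u)`. (The group structures
are the pointwise ones, so the bijection below, which is evaluation at `u`, is
automatically a group isomorphism.) -/
theorem axialFunctions_equiv_invariants {V E : Type*} (G : ConnGraph V E)
    (hconn : G.Connected) (ε c : E → E → ℤ)
    (hε : G.IsSignFunction ε) (hc : G.IsInvariantFunction ε c) (u : V) :
    ∃ Φ : {f : V → E → ℤ // G.IsAxialTuple ε c f} ≃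
          {x : E → ℤ // G.StarSupported u x ∧
            ∀ l : List E, G.IsPath u u l → G.phiList ε c l x = x},
      ∀ f, (Φ f).1 = f.1 u := by
  classical
  open ConnGraphAux in
  choose p hp using fun v => ConnGraphAux.exists_path G (hconn u v)
  let toFun : {f : V → E → ℤ // G.IsAxialTuple ε c f} →
      {x : E → ℤ // G.StarSupported u x ∧
        ∀ l : List E, G.IsPath u u l → G.phiList ε c l x = x} :=
    fun f => ⟨f.1 u, f.2.1 u, fun l hl => ConnGraphAux.axial_path G ε c f.2 hl⟩
  have invAxial : ∀ x : {x : E → ℤ // G.StarSupported u x ∧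
        ∀ l : List E, G.IsPath u u l → G.phiList ε c l x = x},
      G.IsAxialTuple ε c (fun v => G.phiList ε c (p v) x.1) := by
    intro x
    constructor
    · intro v
      exact ConnGraphAux.phiList_supported G ε c (hp v) x.2.1
    · intro e e' h
      have key : G.phiList ε c (p (G.ter e)) x.1
          = G.phi ε c e (G.phiList ε c (p (G.ini e)) x.1) := by
        have hpath : G.IsPath u (G.ter e) (p (G.ini e) ++ [e]) := by
          refine ConnGraphAux.isPath_append G (hp (G.ini e)) ⟨rfl, rfl⟩
        have := ConnGraphAux.well_defined G ε c hε hc x.2.1 x.2.2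
          (hp (G.ter e)) hpath
        rw [this, ConnGraphAux.phiList_append]
        rfl
      simp only [key]
      have hcond : G.ini (G.conn e e') = G.ter e := G.conn_ini e e' h
      have hinv : G.conn (G.rev e) (G.conn e e') = e' := G.conn_inv e e' h
      simp only [ConnGraph.phi, hcond, if_true, hinv]
  let invFun : {x : E → ℤ // G.StarSupported u x ∧
        ∀ l : List E, G.IsPath u u l → G.phiList ε c l x = x} →
      {f : V → E → ℤ // G.IsAxialTuple ε c f} :=
    fun x => ⟨fun v => G.phiList ε c (p v) x.1, invAxial x⟩
  refine ⟨⟨toFun, invFun, ?_, ?_⟩, fun f => rfl⟩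
  · intro f
    apply Subtype.ext
    funext v
    exact ConnGraphAux.axial_path G ε c f.2 (hp v)
  · intro x
    apply Subtype.ext
    have : G.IsPath u u ([] : List E) := rfl
    exact ConnGraphAux.well_defined G ε c hε hc x.2.1 x.2.2 (hp u) this
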